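/- arXiv:1401.0149 — 5 statements merged into one kernel-verified Lean document; each statement's English description precedes it below -/
import Mathlib

section
/- Let (G,H,▷,∂) be a crossed module. The family Φ_{(γ,χ)}(g) = (γgγ⁻¹, χ·((γgγ⁻¹)▷χ⁻¹)) is a natural transformation from the conjugation functor Φ_γ to Φ_{∂(χ)γ}: for every morphism (g₁,η) : g₁ → g₂ = ∂(η)g₁ in 𝒢, we have Φ_{γ₂}(g₁,η) ∘ Φ_{(γ,χ)}(g₁) = Φ_{(γ,χ)}(g₂) ∘ Φ_γ(g₁,η), where γ₂ = ∂(χ)γ. In H this amounts to the identity (γ₂▷η)·χ·((γg₁γ⁻¹)▷χ⁻¹) = χ·((γg₂γ⁻¹)▷χ⁻¹)·(γ▷η). -/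
/-- naturality of `Φ_{(γ,χ)}` for the adjoint action: for a morphism
`(g₁,η) : g₁ → g₂ = ∂(η)g₁` and `γ₂ = ∂(χ)γ`, the naturality square commutes, i.e.
in `H`: `(γ₂▷η)·χ·((γg₁γ⁻¹)▷χ⁻¹) = χ·((γg₂γ⁻¹)▷χ⁻¹)·(γ▷η)`. -/
theorem crossedModule_adjoint_naturality
    {G H : Type*} [Group G] [Group H] [MulDistribMulAction G H]
    (pd : H →* G)
    (hpeif1 : ∀ (g : G) (η : H), pd (g • η) = g * pd η * g⁻¹)
    (hpeif2 : ∀ η ζ : H, (pd η) • ζ = η * ζ * η⁻¹)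
    (γ g₁ g₂ : G) (χ η : H) (hg : g₂ = pd η * g₁) :
    ((pd χ * γ) • η) * (χ * ((γ * g₁ * γ⁻¹) • χ⁻¹))
      = (χ * ((γ * g₂ * γ⁻¹) • χ⁻¹)) * (γ • η) := by
  subst hg
  have h1 : (pd χ * γ) • η = χ * (γ • η) * χ⁻¹ := by rw [mul_smul, hpeif2]
  have key : γ * (pd η * g₁) * γ⁻¹ = pd (γ • η) * (γ * g₁ * γ⁻¹) := by
    rw [hpeif1]; group
  have h2 : (γ * (pd η * g₁) * γ⁻¹) • χ⁻¹
      = (γ • η) * ((γ * g₁ * γ⁻¹) • χ⁻¹) * (γ • η)⁻¹ := by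
    rw [key, mul_smul, hpeif2]
  rw [h1, h2]; group
end

section
/- Let (G,H,▷,∂) be a crossed module. The natural transformations Φ_{(γ,χ)} for the adjoint action satisfy the vertical-composition law (condition F1): for all g ∈ G, Φ_{(γ₂,χ₂)}(g) ∘ Φ_{(γ₁,χ₁)}(g) = Φ_{(γ₁,χ₂χ₁)}(g) where γ₂ = ∂(χ₁)γ₁; in H this amounts to χ₂·((γ₂gγ₂⁻¹)▷χ₂⁻¹)·χ₁·((γ₁gγ₁⁻¹)▷χ₁⁻¹) = χ₂χ₁·((γ₁gγ₁⁻¹)▷(χ₂χ₁)⁻¹). -/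
/-- condition F1 for the adjoint action natural transformations:
`Φ_{(γ₂,χ₂)}(g) ∘ Φ_{(γ₁,χ₁)}(g) = Φ_{(γ₁,χ₂χ₁)}(g)` where `γ₂ = ∂(χ₁)γ₁`;
in `H` this is
`χ₂·((γ₂gγ₂⁻¹)▷χ₂⁻¹)·χ₁·((γ₁gγ₁⁻¹)▷χ₁⁻¹) = χ₂χ₁·((γ₁gγ₁⁻¹)▷(χ₂χ₁)⁻¹)`. -/
theorem crossedModule_adjoint_F1
    {G H : Type*} [Group G] [Group H] [MulDistribMulAction G H]
    (pd : H →* G)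
    (hpeif1 : ∀ (g : G) (η : H), pd (g • η) = g * pd η * g⁻¹)
    (hpeif2 : ∀ η ζ : H, (pd η) • ζ = η * ζ * η⁻¹)
    (γ₁ γ₂ g : G) (χ₁ χ₂ : H) (hγ : γ₂ = pd χ₁ * γ₁) :
    (χ₂ * ((γ₂ * g * γ₂⁻¹) • χ₂⁻¹)) * (χ₁ * ((γ₁ * g * γ₁⁻¹) • χ₁⁻¹))
      = (χ₂ * χ₁) * ((γ₁ * g * γ₁⁻¹) • (χ₂ * χ₁)⁻¹) := by
  subst hγ
  set a := γ₁ * g * γ₁⁻¹ with ha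
  have key : (pd χ₁ * γ₁) * g * (pd χ₁ * γ₁)⁻¹ = pd χ₁ * a * (pd χ₁)⁻¹ := by
    rw [ha]; group
  rw [key]
  have h1 : (pd χ₁ * a * (pd χ₁)⁻¹) • χ₂⁻¹
      = χ₁ * (a • (χ₁⁻¹ * χ₂⁻¹ * χ₁)) * χ₁⁻¹ := by
    have : (pd χ₁)⁻¹ = pd χ₁⁻¹ := by simp
    rw [mul_smul, mul_smul, this, hpeif2, hpeif2]
    simp [mul_assoc]
  rw [h1]
  simp only [smul_mul', smul_inv', mul_inv_rev]
  group
end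

section
/- Let (G,H,▷,∂) be a crossed module. The adjoint action natural transformations satisfy condition F2: for all g ∈ G, Φ_{(γ₁,χ₁)}(Φ_{γ₄}(g)) ∘ Φ_{γ₁}(Φ_{(γ₃,χ₂)}(g)) = Φ_{(γ₁γ₃, χ₁·(γ₁▷χ₂))}(g), where γ₄ = ∂(χ₂)γ₃. -/
/-- condition F2 for the adjoint action:
`Φ_{(γ₁,χ₁)}(Φ_{γ₄}(g)) ∘ Φ_{γ₁}(Φ_{(γ₃,χ₂)}(g)) = Φ_{(γ₁γ₃, χ₁·(γ₁▷χ₂))}(g)`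
where `γ₄ = ∂(χ₂)γ₃`.  Both sides are morphisms of `𝒢` with source
`γ₁γ₃g(γ₁γ₃)⁻¹`, and the equality of their `H`-components is stated. -/
theorem crossedModule_adjoint_F2
    {G H : Type*} [Group G] [Group H] [MulDistribMulAction G H]
    (pd : H →* G)
    (hpeif1 : ∀ (g : G) (η : H), pd (g • η) = g * pd η * g⁻¹)
    (hpeif2 : ∀ η ζ : H, (pd η) • ζ = η * ζ * η⁻¹)
    (γ₁ γ₃ γ₄ g : G) (χ₁ χ₂ : H) (hγ : γ₄ = pd χ₂ * γ₃) :
    -- sources agree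
    (γ₁ * (γ₃ * g * γ₃⁻¹) * γ₁⁻¹ = (γ₁ * γ₃) * g * (γ₁ * γ₃)⁻¹) ∧
    -- H-components agree
    ((χ₁ * ((γ₁ * (γ₄ * g * γ₄⁻¹) * γ₁⁻¹) • χ₁⁻¹))
        * (γ₁ • (χ₂ * ((γ₃ * g * γ₃⁻¹) • χ₂⁻¹)))
      = (χ₁ * (γ₁ • χ₂))
        * (((γ₁ * γ₃) * g * (γ₁ * γ₃)⁻¹) • (χ₁ * (γ₁ • χ₂))⁻¹)) := by
  constructor
  · group
  · subst hγ
    set a : G := (γ₁ * γ₃) * g * (γ₁ * γ₃)⁻¹ with ha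
    set β : H := γ₁ • χ₂ with hβ
    have h1 : γ₁ * (pd χ₂ * γ₃ * g * (pd χ₂ * γ₃)⁻¹) * γ₁⁻¹
        = pd β * a * (pd β)⁻¹ := by
      rw [hβ, hpeif1, ha]; group
    rw [h1]
    have h2 : (pd β * a * (pd β)⁻¹) • χ₁⁻¹
        = β * (a • (β⁻¹ * χ₁⁻¹ * β)) * β⁻¹ := by
      rw [mul_smul, mul_smul, hpeif2]
      congr 1
      congr 1
      congr 1
      rw [← map_inv, hpeif2]
      group
    rw [h2]
    have h3 : γ₁ • (χ₂ * ((γ₃ * g * γ₃⁻¹) • χ₂⁻¹))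
        = β * (a • β⁻¹) := by
      rw [smul_mul', ← hβ, hβ, ← smul_inv', ← mul_smul, ← mul_smul, ha]
      congr 2
      group
    rw [h3]
    simp only [mul_inv_rev, smul_mul', smul_inv']
    group
end

section
/- Let (G,H,▷,∂) be a crossed module with associated 2-group 𝒢 acting on itself by the adjoint action. In the horizontal 2-category H(𝒢 ⫽ 𝒢), the 2-morphisms with source (g,η) are labeled by χ ∈ ker(∂), and the target of the 2-morphism labeled χ is (g, η·χ·(g▷χ⁻¹)). Moreover the map χ ↦ (target morphism) is compatible with multiplication in ker(∂): applying χ' after χ yields target (g, η·(χ'χ)·(g▷(χ'χ)⁻¹)). -/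
/-- in the horizontal 2-category `H(𝒢 ⫽ 𝒢)` of the adjoint action,
2-morphisms with source `(g,η)` are labelled by `χ ∈ ker ∂`, the target of the
2-morphism labelled `χ` is `(g, η·χ·(g▷χ⁻¹))`, and applying `χ'` after `χ` has
target `(g, η·(χ'χ)·(g▷(χ'χ)⁻¹))`, so targets compose via multiplication in
`ker ∂`. -/
theorem adjoint_horizontal_two_category_targets
    {G H : Type*} [Group G] [Group H] [MulDistribMulAction G H]
    (pd : H →* G)
    (hpeif1 : ∀ (g : G) (η : H), pd (g • η) = g * pd η * g⁻¹)
    (hpeif2 : ∀ η ζ : H, (pd η) • ζ = η * ζ * η⁻¹)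
    (g : G) (η χ χ' : H) (hχ : pd χ = 1) (hχ' : pd χ' = 1) :
    -- the boundary of the square labelled χ is trivial, so it is a 2-morphism
    pd (χ * (g • χ⁻¹)) = 1 ∧
    -- applying χ' after χ yields the target labelled by χ'χ
    (η * χ * (g • χ⁻¹)) * χ' * (g • χ'⁻¹)
      = η * (χ' * χ) * (g • (χ' * χ)⁻¹) := by
  have central : ∀ ψ : H, pd ψ = 1 → ∀ ζ : H, ψ * ζ = ζ * ψ := by
    intro ψ hψ ζ
    have h := hpeif2 ψ ζ
    rw [hψ, one_smul] at h
    conv_rhs => rw [h]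
    group
  constructor
  · rw [map_mul, hχ, hpeif1, map_inv, hχ, inv_one, mul_one, mul_inv_cancel, one_mul]
  · rw [mul_inv_rev, smul_mul']
    have h1 : χ * (g • χ⁻¹) = (g • χ⁻¹) * χ := central χ hχ _
    have h2 : χ' * (g • χ⁻¹) = (g • χ⁻¹) * χ' := central χ' hχ' _
    have h3 : χ * χ' = χ' * χ := central χ hχ _
    calc η * χ * (g • χ⁻¹) * χ' * (g • χ'⁻¹)
        = η * (χ * ((g • χ⁻¹) * χ')) * (g • χ'⁻¹) := by group
      _ = η * (χ' * χ * (g • χ⁻¹)) * (g • χ'⁻¹) := by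
          have key : χ * ((g • χ⁻¹) * χ') = χ' * χ * (g • χ⁻¹) := by
            rw [← h2, ← mul_assoc, h3]
          rw [key]
      _ = η * (χ' * χ) * (g • χ⁻¹ * g • χ'⁻¹) := by group
end

section
/- Let (G,H,▷,∂) be a crossed module and consider squares ⟨(γ,χ),(g,η)⟩ with horizontal and vertical composition: ⟨(γ₂,χ₂),(g₂,η₂)⟩ ∘_h ⟨(γ₁,χ₁),(g₁,η₁)⟩ = ⟨(γ₁,χ₂χ₁),(g₁,η₂η₁)⟩ (when γ₂ = ∂(χ₁)γ₁ and g₂ = ∂(η₁)g₁), and ⟨(γ₁,χ₁),(γ₃,χ₂)⊳(g,η)⟩ ∘_v ⟨(γ₃,χ₂),(g,η)⟩ = ⟨(γ₁γ₃, χ₁(γ₁▷χ₂)),(g,η)⟩, where (γ,χ)⊳(g,η) = (γgγ⁻¹, χ·(γ▷η)·((γgγ⁻¹)▷χ⁻¹)). Then the interchange law holds: composing a 2×2 array of composable squares horizontally-then-vertically equals composing vertically-then-horizontally. -/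
/-- The adjoint action of `G ⋉ H` on morphisms:
`(γ,χ) ⊳ (g,η) = (γgγ⁻¹, χ·(γ▷η)·((γgγ⁻¹)▷χ⁻¹))`. -/
def adAct {G H : Type*} [Group G] [Group H] [MulDistribMulAction G H]
    (p q : G × H) : G × H :=
  (p.1 * q.1 * p.1⁻¹, p.2 * (p.1 • q.2) * ((p.1 * q.1 * p.1⁻¹) • p.2⁻¹))

/-- Horizontal composition of squares `⟨(γ₁,χ₁),(g₁,η₁)⟩` (left) and
`⟨(γ₂,χ₂),(g₂,η₂)⟩` (right): result `⟨(γ₁,χ₂χ₁),(g₁,η₂η₁)⟩`. -/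
def sqHComp {G H : Type*} [Group G] [Group H] [MulDistribMulAction G H]
    (σ τ : (G × H) × (G × H)) : (G × H) × (G × H) :=
  ((σ.1.1, τ.1.2 * σ.1.2), (σ.2.1, τ.2.2 * σ.2.2))

/-- Vertical composition of squares: top `⟨(γ₃,χ₂),(g,η)⟩`, bottom
`⟨(γ₁,χ₁), (γ₃,χ₂)⊳(g,η)⟩`: result `⟨(γ₁γ₃, χ₁(γ₁▷χ₂)),(g,η)⟩`. -/
def sqVComp {G H : Type*} [Group G] [Group H] [MulDistribMulAction G H]
    (top bot : (G × H) × (G × H)) : (G × H) × (G × H) :=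
  ((bot.1.1 * top.1.1, bot.1.2 * (bot.1.1 • top.1.2)), top.2)

/-- interchange law for a 2×2 array of composable squares of the
transformation double category: composing horizontally then vertically equals
composing vertically then horizontally.  The array is parametrized by its
top-left square `⟨(α,a),(g,m)⟩` together with the labels `b, n` of the top-right
square, and the labels `(β,c)` and `d` of the bottom row; composability then
determines all remaining boundary data. -/
theorem transformation_double_category_interchange
    {G H : Type*} [Group G] [Group H] [MulDistribMulAction G H]
    (pd : H →* G)
    (hpeif1 : ∀ (g : G) (η : H), pd (g • η) = g * pd η * g⁻¹)
    (hpeif2 : ∀ η ζ : H, (pd η) • ζ = η * ζ * η⁻¹)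
    (α β g : G) (a b c d m n : H) :
    sqVComp
      (sqHComp (((α, a), (g, m)) : (G × H) × (G × H))
               ((pd a * α, b), (pd m * g, n)))
      (sqHComp ((β, c), adAct (α, a) (g, m))
               ((pd c * β, d), adAct (pd a * α, b) (pd m * g, n)))
    = sqHComp
        (sqVComp ((α, a), (g, m)) ((β, c), adAct (α, a) (g, m)))
        (sqVComp ((pd a * α, b), (pd m * g, n))
                 ((pd c * β, d), adAct (pd a * α, b) (pd m * g, n))) := by
  simp only [sqVComp, sqHComp, adAct, Prod.mk.injEq, mul_smul, smul_mul', hpeif2]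
  group
  simp
end
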